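/- Let q be a prime with q ≡ 11 or 13 (mod 24) (i.e. q ≡ ±11 (mod 24)). For every complex number s with Re(s) > 1, L(s, λ_q) = (ζ(qs) ζ(2s) / ζ(s)) · ∏_p ( 1 + ∑_{m=3}^{q-1} { ((m+1)/q) + (m/q) } · p^{-ms} ), where the product runs over all prime numbers p. -/

import Mathlib

open Filter

/-- `λ_q(n) = (τ(n)/q)` : the Legendre symbol mod `q` of the number of divisors of `n`. -/
noncomputable def lamq (q : ℕ) [Fact q.Prime] (n : ℕ) : ℂ :=
  (legendreSym q (n.divisors.card : ℤ) : ℂ)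


section Leg
variable {q : ℕ} [Fact q.Prime]

lemma leg_abs (a : ℤ) : ‖(legendreSym q a : ℂ)‖ ≤ 1 := by
  rcases eq_or_ne ((a : ZMod q)) 0 with h | h
  · rw [(legendreSym.eq_zero_iff q a).mpr h]; norm_num
  · by_cases hsq : IsSquare ((a : ZMod q))
    · rw [(legendreSym.eq_one_iff q h).mpr hsq]; norm_num
    · rw [(legendreSym.eq_neg_one_iff q).mpr hsq]; norm_num

lemma leg_periodic (a : ℤ) : legendreSym q (a + q) = legendreSym q a := by
  rw [legendreSym.mod q (a + q), legendreSym.mod q a]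
  congr 1
  rw [Int.add_emod, Int.emod_self, add_zero, Int.emod_emod_of_dvd a dvd_rfl]

lemma leg_self : legendreSym q q = 0 := by
  rw [legendreSym.eq_zero_iff]
  exact_mod_cast ZMod.natCast_self q

end Leg

section Leg2
variable {q : ℕ} [Fact q.Prime] (hq : q % 24 = 11 ∨ q % 24 = 13)

include hq

lemma hq_ge : 11 ≤ q := by have := Nat.mod_le q 24; omega

lemma hq_ne_two : q ≠ 2 := by omega

lemma leg_two : legendreSym q 2 = -1 := by
  rw [legendreSym.at_two (hq_ne_two hq), ZMod.χ₈_nat_eq_if_mod_eight]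
  have h8 : q % 8 = 3 ∨ q % 8 = 5 := by
    have := Nat.mod_mod_of_dvd q (by norm_num : 8 ∣ 24); omega
  have h2 : q % 2 = 1 := by omega
  rcases h8 with h | h <;> simp [h, h2]

lemma notsq : ¬ IsSquare (2 : ZMod 3) := by decide

lemma leg_three : legendreSym q 3 = 1 := by
  have hns := notsq hq
  haveI h3 : Fact (Nat.Prime 3) := ⟨by norm_num⟩
  have hne : (3 : ℕ) ≠ q := by omega
  have hrec := legendreSym.quadratic_reciprocity (p := 3) (q := q) (by norm_num)
    (hq_ne_two hq) hne
  have hmod : legendreSym 3 (q : ℤ) = legendreSym 3 ((q % 3 : ℕ) : ℤ) := by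
    rw [legendreSym.mod 3 (q : ℤ)]
    norm_cast
  have h24 : q % 3 = (q % 24) % 3 := by
    rw [Nat.mod_mod_of_dvd q (by norm_num : 3 ∣ 24)]
  have hq4 : q / 2 % 2 = q % 4 / 2 := by
    exact (Nat.mod_mul_right_div_self q 2 2).symm
  have h4 : q % 4 = (q % 24) % 4 := by
    rw [Nat.mod_mod_of_dvd q (by norm_num : 4 ∣ 24)]
  rcases hq with h | h
  · -- q % 3 = 2, q % 4 = 3, so q/2 odd
    have hq3 : q % 3 = 2 := by omega
    have : legendreSym 3 (q : ℤ) = -1 := by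
      rw [hmod, hq3]
      rw [legendreSym.eq_neg_one_iff 3 (a := ((2 : ℕ) : ℤ))]
      have hc : (((2 : ℕ) : ℤ) : ZMod 3) = (2 : ZMod 3) := by norm_cast
      rw [hc]
      exact hns
    have hodd : Odd (q / 2) := by
      rw [Nat.odd_iff, hq4]; omega
    rw [this, show (3 : ℕ) / 2 = 1 by norm_num, one_mul, hodd.neg_one_pow] at hrec
    push_cast at hrec ⊢
    linarith
  · have hq3 : q % 3 = 1 := by omega
    have : legendreSym 3 (q : ℤ) = 1 := by
      rw [hmod, hq3]
      exact_mod_cast legendreSym.at_one 3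
    have heven : Even (q / 2) := by
      rw [Nat.even_iff, hq4]; omega
    rw [this, show (3 : ℕ) / 2 = 1 by norm_num, one_mul, heven.neg_one_pow] at hrec
    push_cast at hrec ⊢
    linarith

end Leg2


section Local
variable {q : ℕ} [Fact q.Prime] (hq : q % 24 = 11 ∨ q % 24 = 13)


include hq

lemma claim_poly (x : ℂ) :
    (1 + x) * ∑ m ∈ Finset.range q, (legendreSym q ((m : ℤ) + 1) : ℂ) * x ^ m
      = 1 + ∑ m ∈ Finset.Icc 3 (q - 1),
          ((legendreSym q ((m : ℤ) + 1) + legendreSym q (m : ℤ) : ℤ) : ℂ) * x ^ m := by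
  have h11 : 11 ≤ q := hq_ge hq
  have hIcc : Finset.Icc 3 (q - 1) = Finset.Ico 3 q := by
    rw [← Finset.Ico_add_one_right_eq_Icc]
    congr 1
    omega
  set c : ℕ → ℂ := fun m => (legendreSym q ((m : ℤ) + 1) : ℂ) with hc
  set d : ℕ → ℂ := fun m => (legendreSym q (m : ℤ) : ℂ) with hd
  have hcd : ∀ m : ℕ, c m = d (m + 1) := by
    intro m
    simp only [hc, hd]
    norm_cast
  have hc0 : c 0 = 1 := by
    simp only [hc]
    rw [show ((0 : ℕ) : ℤ) + 1 = 1 from by norm_num]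
    exact_mod_cast legendreSym.at_one q
  have hc1 : c 1 = -1 := by
    simp only [hc]
    rw [show ((1 : ℕ) : ℤ) + 1 = 2 from by norm_num]
    exact_mod_cast leg_two hq
  have hc2 : c 2 = 1 := by
    simp only [hc]
    rw [show ((2 : ℕ) : ℤ) + 1 = 3 from by norm_num]
    exact_mod_cast leg_three hq
  have hd1 : d 1 = 1 := by
    simp only [hd]
    exact_mod_cast legendreSym.at_one q
  have hd2 : d 2 = -1 := by
    simp only [hd]
    exact_mod_cast leg_two hq
  have hdq : d q = 0 := by
    simp only [hd]
    exact_mod_cast leg_self (q := q)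
  have hP : ∑ m ∈ Finset.range q, c m * x ^ m
      = (1 - x + x ^ 2) + ∑ m ∈ Finset.Ico 3 q, c m * x ^ m := by
    rw [Finset.range_eq_Ico,
      ← Finset.sum_Ico_consecutive (fun m => c m * x ^ m) (by omega : 0 ≤ 3) (by omega : 3 ≤ q)]
    congr 1
    rw [← Finset.range_eq_Ico]
    rw [Finset.sum_range_succ, Finset.sum_range_succ, Finset.sum_range_succ,
      Finset.sum_range_zero, hc0, hc1, hc2]
    ring
  have hxP : x * ∑ m ∈ Finset.range q, c m * x ^ m
      = (x - x ^ 2) + ∑ m ∈ Finset.Ico 3 q, d m * x ^ m := by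
    rw [Finset.mul_sum]
    rw [Finset.sum_congr rfl fun m _ => show x * (c m * x ^ m) = d (m + 1) * x ^ (m + 1) by
      rw [hcd]; ring]
    have hsh : ∑ m ∈ Finset.range q, d (m + 1) * x ^ (m + 1)
        = ∑ k ∈ Finset.Ico 1 (q + 1), d k * x ^ k := by
      rw [Finset.sum_Ico_eq_sum_range]
      simp only [Nat.add_sub_cancel]
      exact Finset.sum_congr rfl fun i _ => by rw [Nat.add_comm 1 i]
    rw [hsh, Finset.sum_Ico_succ_top (by omega : 1 ≤ q), hdq,
      ← Finset.sum_Ico_consecutive (fun m => d m * x ^ m) (by omega : 1 ≤ 3) (by omega : 3 ≤ q)]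
    have h13 : ∑ m ∈ Finset.Ico 1 3, d m * x ^ m = x - x ^ 2 := by
      rw [show Finset.Ico 1 3 = {1, 2} from by decide]
      rw [Finset.sum_insert (by decide), Finset.sum_singleton, hd1, hd2]
      ring
    rw [h13]
    ring
  have hsplit : ∑ m ∈ Finset.Ico 3 q,
        ((legendreSym q ((m : ℤ) + 1) + legendreSym q (m : ℤ) : ℤ) : ℂ) * x ^ m
      = (∑ m ∈ Finset.Ico 3 q, c m * x ^ m) + ∑ m ∈ Finset.Ico 3 q, d m * x ^ m := by
    rw [← Finset.sum_add_distrib]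
    refine Finset.sum_congr rfl fun m _ => ?_
    simp only [hc, hd]
    push_cast
    ring
  calc (1 + x) * ∑ m ∈ Finset.range q, c m * x ^ m
      = (∑ m ∈ Finset.range q, c m * x ^ m) + x * ∑ m ∈ Finset.range q, c m * x ^ m := by ring
    _ = 1 + ((∑ m ∈ Finset.Ico 3 q, c m * x ^ m) + ∑ m ∈ Finset.Ico 3 q, d m * x ^ m) := by
        rw [hxP, hP]; ring
    _ = _ := by rw [hIcc, hsplit]

lemma local_id {x : ℂ} (hx : ‖x‖ ≤ 1 / 2) :
    ∑' e : ℕ, (legendreSym q ((e : ℤ) + 1) : ℂ) * x ^ e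
      = (1 - x ^ q)⁻¹ * ((1 - x ^ 2)⁻¹ * ((1 - x) *
        (1 + ∑ m ∈ Finset.Icc 3 (q - 1),
          ((legendreSym q ((m : ℤ) + 1) + legendreSym q (m : ℤ) : ℤ) : ℂ) * x ^ m))) := by
  have h11 : 11 ≤ q := hq_ge hq
  have hx1 : ‖x‖ < 1 := lt_of_le_of_lt hx (by norm_num)
  set c : ℕ → ℂ := fun m => (legendreSym q ((m : ℤ) + 1) : ℂ) with hc
  have hsum : Summable fun e : ℕ => c e * x ^ e := by
    apply Summable.of_norm_bounded (g := fun e => ‖x‖ ^ e)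
      (summable_geometric_of_lt_one (norm_nonneg x) hx1)
    intro e
    rw [norm_mul, norm_pow]
    calc ‖c e‖ * ‖x‖ ^ e ≤ 1 * ‖x‖ ^ e := by
          apply mul_le_mul_of_nonneg_right (leg_abs _) (by positivity)
      _ = ‖x‖ ^ e := one_mul _
  have hq0 : (1 : ℂ) - x ^ q ≠ 0 := by
    rw [sub_ne_zero]
    intro h
    have h2 := congrArg norm h
    rw [norm_one, norm_pow] at h2
    have : ‖x‖ ^ q < 1 := pow_lt_one₀ (norm_nonneg x) hx1 (by omega)
    linarith
  have hmx : (1 : ℂ) - x ≠ 0 := by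
    rw [sub_ne_zero]
    intro h
    have h2 := congrArg norm h
    rw [norm_one] at h2
    linarith
  have hpx : (1 : ℂ) + x ≠ 0 := by
    intro h
    have hxe : x = -1 := by linear_combination h
    rw [hxe] at hx1
    norm_num at hx1
  have h2x : (1 : ℂ) - x ^ 2 ≠ 0 := by
    rw [show (1 : ℂ) - x ^ 2 = (1 - x) * (1 + x) from by ring]
    exact mul_ne_zero hmx hpx
  have key := Summable.sum_add_tsum_nat_add (f := fun e => c e * x ^ e) q hsum
  have hper : ∀ i : ℕ, c (i + q) * x ^ (i + q) = c i * x ^ i * x ^ q := by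
    intro i
    have hcast : ((i + q : ℕ) : ℤ) + 1 = ((i : ℤ) + 1) + q := by push_cast; ring
    have : c (i + q) = c i := by
      simp only [hc]
      rw [hcast, leg_periodic]
    rw [this, pow_add]
    ring
  rw [tsum_congr hper, tsum_mul_right] at key
  have hS : ∑' e : ℕ, c e * x ^ e
      = (∑ i ∈ Finset.range q, c i * x ^ i) * (1 - x ^ q)⁻¹ := by
    rw [eq_mul_inv_iff_mul_eq₀ hq0]
    linear_combination -key
  rw [hS, ← claim_poly hq x, show (1 : ℂ) - x ^ 2 = (1 - x) * (1 + x) from by ring]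
  have hfin : (((1 - x) * (1 + x))⁻¹ * ((1 - x) *
      ((1 + x) * ∑ m ∈ Finset.range q, c m * x ^ m)))
      = ∑ m ∈ Finset.range q, c m * x ^ m := by
    rw [mul_inv]
    set P := ∑ m ∈ Finset.range q, c m * x ^ m with hP
    calc (1 - x)⁻¹ * (1 + x)⁻¹ * ((1 - x) * ((1 + x) * P))
        = ((1 - x)⁻¹ * (1 - x)) * ((1 + x)⁻¹ * (1 + x)) * P := by ring
      _ = P := by rw [inv_mul_cancel₀ hmx, inv_mul_cancel₀ hpx, one_mul, one_mul]
  rw [hfin, mul_comm]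

end Local

/-- Criterion for multipliability over `ℂ`. -/
lemma mult_one_add {ι : Type*} {f : ι → ℂ} (h : Summable f) (hb : ∀ i, ‖f i‖ ≤ 1 / 2) :
    Multipliable (fun i => 1 + f i) := by
  have hn : ∀ i, 1 + f i ≠ 0 := by
    intro i hzero
    have hfi : f i = -1 := by linear_combination hzero
    have := hb i
    rw [hfi] at this
    norm_num at this
  exact Complex.multipliable_one_add_of_summable h

theorem dirichlet_series_lamq_pm11_mod24 (q : ℕ) [Fact q.Prime]
    (hq : q % 24 = 11 ∨ q % 24 = 13) (s : ℂ) (hs : 1 < s.re) :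
    LSeries (lamq q) s =
      riemannZeta (q * s) * riemannZeta (2 * s) / riemannZeta s *
        ∏' p : Nat.Primes,
          (1 + ∑ m ∈ Finset.Icc 3 (q - 1),
            ((legendreSym q ((m : ℤ) + 1) + legendreSym q (m : ℤ) : ℤ) : ℂ) *
              ((p : ℕ) : ℂ) ^ (-((m : ℂ) * s))) := by
  have h11 : 11 ≤ q := hq_ge hq
  -- multiplicativity data for the Euler product
  have hf₁ : LSeries.term (lamq q) s 1 = 1 := by
    rw [LSeries.term_of_ne_zero one_ne_zero]
    have h1 : lamq q 1 = 1 := by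
      unfold lamq
      rw [Nat.divisors_one, Finset.card_singleton, Nat.cast_one]
      exact_mod_cast legendreSym.at_one q
    rw [h1, Nat.cast_one, Complex.one_cpow, div_one]
  have hmul : ∀ {m n : ℕ}, Nat.Coprime m n →
      LSeries.term (lamq q) s (m * n)
        = LSeries.term (lamq q) s m * LSeries.term (lamq q) s n := by
    intro m n hmn
    rcases eq_or_ne m 0 with rfl | hm
    · have hn1 : n = 1 := by simpa using hmn
      subst hn1
      simp [hf₁]
    rcases eq_or_ne n 0 with rfl | hn
    · have hm1 : m = 1 := by simpa using hmn
      subst hm1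
      simp [hf₁]
    rw [LSeries.term_of_ne_zero (Nat.mul_ne_zero hm hn), LSeries.term_of_ne_zero hm,
      LSeries.term_of_ne_zero hn]
    have hl : lamq q (m * n) = lamq q m * lamq q n := by
      unfold lamq
      rw [Nat.Coprime.card_divisors_mul hmn]
      rw [show ((m.divisors.card * n.divisors.card : ℕ) : ℤ)
          = (m.divisors.card : ℤ) * (n.divisors.card : ℤ) from by push_cast; ring]
      rw [legendreSym.mul]
      push_cast
      ring
    have hcp : ((m * n : ℕ) : ℂ) ^ s = (m : ℂ) ^ s * (n : ℂ) ^ s := by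
      have h1 : ((m * n : ℕ) : ℂ) = (((m : ℝ)) : ℂ) * (((n : ℝ)) : ℂ) := by push_cast; ring
      rw [h1, Complex.mul_cpow_ofReal_nonneg (Nat.cast_nonneg m) (Nat.cast_nonneg n)]
      norm_num
    rw [hl, hcp, mul_div_mul_comm]
  have hsum : Summable fun n => ‖LSeries.term (lamq q) s n‖ := by
    apply Summable.of_nonneg_of_le (fun n => norm_nonneg _) _
      ((Real.summable_nat_rpow_inv).mpr hs)
    intro n
    rw [LSeries.norm_term_eq]
    rcases eq_or_ne n 0 with rfl | hn
    · simp [Real.zero_rpow (by linarith : s.re ≠ 0)]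
    · rw [if_neg hn, ← one_div]
      have hb : ‖lamq q n‖ ≤ 1 := leg_abs _
      gcongr
  have hE := EulerProduct.eulerProduct_hasProd hf₁ hmul hsum (LSeries.term_zero _ _)
  -- norms of p^{-s}
  have hxnorm : ∀ p : Nat.Primes, ‖((p : ℕ) : ℂ) ^ (-s)‖ ≤ 1 / 2 := by
    intro p
    rw [Complex.norm_natCast_cpow_of_pos p.prop.pos]
    have h2 : (2 : ℝ) ≤ ((p : ℕ) : ℝ) := by exact_mod_cast p.prop.two_le
    have hre : (-s).re = -s.re := by simp
    rw [hre]
    calc ((p : ℕ) : ℝ) ^ (-s.re)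
        ≤ ((p : ℕ) : ℝ) ^ (-1 : ℝ) :=
          Real.rpow_le_rpow_of_exponent_le (by linarith) (by linarith)
      _ = (((p : ℕ) : ℝ))⁻¹ := Real.rpow_neg_one _
      _ ≤ 1 / 2 := by
          rw [one_div]
          gcongr
  have hx1 : ∀ p : Nat.Primes, ‖((p : ℕ) : ℂ) ^ (-s)‖ < 1 :=
    fun p => lt_of_le_of_lt (hxnorm p) (by norm_num)
  -- cpow conversions
  have hxpow : ∀ (p : Nat.Primes) (m : ℕ),
      ((p : ℕ) : ℂ) ^ (-((m : ℂ) * s)) = (((p : ℕ) : ℂ) ^ (-s)) ^ m := by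
    intro p m
    rw [show -((m : ℂ) * s) = (m : ℂ) * (-s) from by ring, Complex.cpow_nat_mul]
  -- local factor computation
  have hloc : ∀ p : Nat.Primes,
      (∑' e : ℕ, LSeries.term (lamq q) s ((p : ℕ) ^ e))
        = ∑' e : ℕ, (legendreSym q ((e : ℤ) + 1) : ℂ) * (((p : ℕ) : ℂ) ^ (-s)) ^ e := by
    intro p
    refine tsum_congr fun e => ?_
    have hpe : ((p : ℕ) ^ e) ≠ 0 := pow_ne_zero e p.prop.pos.ne'
    rw [LSeries.term_of_ne_zero hpe]
    have hcard : ((p : ℕ) ^ e).divisors.card = e + 1 := by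
      rw [Nat.divisors_prime_pow p.prop, Finset.card_map, Finset.card_range]
    have hlam : lamq q ((p : ℕ) ^ e) = (legendreSym q ((e : ℤ) + 1) : ℂ) := by
      unfold lamq
      rw [hcard]
      norm_num
    rw [hlam]
    have hd : (((p : ℕ) ^ e : ℕ) : ℂ) ^ s = (((p : ℕ) : ℂ) ^ e) ^ s := by
      norm_cast
    rw [hd, ← Complex.natCast_cpow_natCast_mul (p : ℕ) e s, div_eq_mul_inv, ← Complex.cpow_neg,
      show -((e : ℂ) * s) = (e : ℂ) * (-s) from by ring, Complex.cpow_nat_mul]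
  -- the four Euler factors
  set x : Nat.Primes → ℂ := fun p => ((p : ℕ) : ℂ) ^ (-s) with hxdef
  set D : Nat.Primes → ℂ := fun p =>
    1 + ∑ m ∈ Finset.Icc 3 (q - 1),
      ((legendreSym q ((m : ℤ) + 1) + legendreSym q (m : ℤ) : ℤ) : ℂ) *
        ((p : ℕ) : ℂ) ^ (-((m : ℂ) * s)) with hDdef
  have hDform : ∀ p : Nat.Primes, D p =
      1 + ∑ m ∈ Finset.Icc 3 (q - 1),
        ((legendreSym q ((m : ℤ) + 1) + legendreSym q (m : ℤ) : ℤ) : ℂ) * (x p) ^ m := by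
    intro p
    rw [hDdef]
    simp only
    rw [Finset.sum_congr rfl fun m _ => by rw [hxpow p m]]
  -- zeta Euler products
  have hqre : 1 < ((q : ℂ) * s).re := by
    have hre : ((q : ℂ) * s).re = (q : ℝ) * s.re := by
      simp [Complex.mul_re]
    rw [hre]
    have hq1 : (11 : ℝ) ≤ (q : ℝ) := by exact_mod_cast h11
    nlinarith
  have h2re : 1 < ((2 : ℂ) * s).re := by
    have hre : ((2 : ℂ) * s).re = 2 * s.re := by simp [Complex.mul_re]
    rw [hre]
    linarith
  have hA := riemannZeta_eulerProduct_hasProd hqre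
  have hB := riemannZeta_eulerProduct_hasProd h2re
  have hC := riemannZeta_eulerProduct_hasProd hs
  -- x ^ q and x ^ 2 in cpow form
  have hxq : ∀ p : Nat.Primes, ((p : ℕ) : ℂ) ^ (-((q : ℂ) * s)) = (x p) ^ q := fun p => hxpow p q
  have hx2 : ∀ p : Nat.Primes, ((p : ℕ) : ℂ) ^ (-((2 : ℂ) * s)) = (x p) ^ 2 := by
    intro p
    have := hxpow p 2
    rw [show (((2 : ℕ) : ℂ)) = (2 : ℂ) from by norm_num] at this
    exact this
  -- summability of x over primes
  have hxsummable : Summable fun p : Nat.Primes => ‖x p‖ := by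
    have h0 : Summable fun n : ℕ => (((n : ℝ)) ^ s.re)⁻¹ := (Real.summable_nat_rpow_inv).mpr hs
    have h1 : Summable fun p : Nat.Primes => (((p : ℕ) : ℝ) ^ s.re)⁻¹ :=
      h0.comp_injective Subtype.coe_injective
    apply h1.congr
    intro p
    rw [hxdef]
    simp only
    rw [Complex.norm_natCast_cpow_of_pos p.prop.pos,
      show (-s).re = -s.re from by simp, Real.rpow_neg (Nat.cast_nonneg _)]
  -- multipliability of C and D factors
  have hCm : Multipliable fun p : Nat.Primes => 1 - x p := by
    have := mult_one_add (f := fun p : Nat.Primes => -x p)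
      (hxsummable.of_norm.neg) (by intro p; rw [norm_neg]; exact hxnorm p)
    apply this.congr
    intro p
    ring
  have hDbound : ∀ p : Nat.Primes, ‖D p - 1‖ ≤ 4 * ‖x p‖ ^ 3 := by
    intro p
    rw [hDform p, add_sub_cancel_left]
    calc ‖∑ m ∈ Finset.Icc 3 (q - 1),
          ((legendreSym q ((m : ℤ) + 1) + legendreSym q (m : ℤ) : ℤ) : ℂ) * (x p) ^ m‖
        ≤ ∑ m ∈ Finset.Icc 3 (q - 1), 2 * ‖x p‖ ^ m := by
          apply (norm_sum_le _ _).trans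
          apply Finset.sum_le_sum
          intro m _
          rw [norm_mul, norm_pow]
          gcongr
          push_cast
          calc ‖((legendreSym q ((m : ℤ) + 1) : ℂ)) + ((legendreSym q (m : ℤ) : ℂ))‖
              ≤ ‖((legendreSym q ((m : ℤ) + 1) : ℂ))‖ + ‖((legendreSym q (m : ℤ) : ℂ))‖ :=
                norm_add_le _ _
            _ ≤ 2 := by
                have := leg_abs (q := q) ((m : ℤ) + 1)
                have := leg_abs (q := q) (m : ℤ)
                linarith
      _ ≤ ∑ m ∈ Finset.Icc 3 (q - 1), 2 * (‖x p‖ ^ 3 * (1 / 2 : ℝ) ^ (m - 3)) := by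
          apply Finset.sum_le_sum
          intro m hm
          have hm3 : 3 ≤ m := (Finset.mem_Icc.mp hm).1
          have : ‖x p‖ ^ m = ‖x p‖ ^ 3 * ‖x p‖ ^ (m - 3) := by
            rw [← pow_add]
            congr 1
            omega
          rw [this]
          gcongr
          all_goals first
            | exact norm_nonneg _
            | exact hxnorm p
      _ = 2 * (‖x p‖ ^ 3 * ∑ m ∈ Finset.Icc 3 (q - 1), (1 / 2 : ℝ) ^ (m - 3)) := by
          rw [Finset.mul_sum, Finset.mul_sum]
      _ ≤ 2 * (‖x p‖ ^ 3 * 2) := by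
          gcongr 2 * (‖x p‖ ^ 3 * ?_)
          calc ∑ m ∈ Finset.Icc 3 (q - 1), (1 / 2 : ℝ) ^ (m - 3)
              = ∑ i ∈ Finset.range (q - 1 + 1 - 3), (1 / 2 : ℝ) ^ i := by
                rw [← Finset.Ico_add_one_right_eq_Icc, Finset.sum_Ico_eq_sum_range]
                exact Finset.sum_congr rfl fun i _ => by congr 1; omega
            _ ≤ 2 := sum_geometric_two_le _
      _ = 4 * ‖x p‖ ^ 3 := by ring
  have hDm : Multipliable D := by
    have hDs : Summable fun p : Nat.Primes => D p - 1 := by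
      apply Summable.of_norm_bounded (g := fun p => ‖x p‖) hxsummable
      intro p
      calc ‖D p - 1‖ ≤ 4 * ‖x p‖ ^ 3 := hDbound p
        _ ≤ ‖x p‖ := by
            have h1 := hxnorm p
            have h2 : (0 : ℝ) ≤ ‖x p‖ := norm_nonneg _
            nlinarith [pow_le_pow_left₀ h2 h1 2, sq_nonneg (‖x p‖)]
    have hDb : ∀ p, ‖D p - 1‖ ≤ 1 / 2 := by
      intro p
      calc ‖D p - 1‖ ≤ 4 * ‖x p‖ ^ 3 := hDbound p
        _ ≤ 1 / 2 := by
            have h1 := hxnorm p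
            have h2 : (0 : ℝ) ≤ ‖x p‖ := norm_nonneg _
            nlinarith [pow_le_pow_left₀ h2 h1 3]
    have := mult_one_add hDs hDb
    apply this.congr
    intro p
    ring
  -- nonvanishing of 1 - x p
  have hmx : ∀ p : Nat.Primes, (1 : ℂ) - x p ≠ 0 := by
    intro p
    rw [sub_ne_zero]
    intro h
    have h2 := congrArg norm h
    rw [norm_one] at h2
    have h3 : ‖x p‖ < 1 := hx1 p
    linarith
  -- tprod of C equals ζ(s)⁻¹
  have hζs : riemannZeta s ≠ 0 := riemannZeta_ne_zero_of_one_lt_re hs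
  have hCprod : ∏' p : Nat.Primes, (1 - x p) = (riemannZeta s)⁻¹ := by
    have hmul2 := hCm.hasProd.mul hC
    have hfun : (fun p : Nat.Primes => (1 - x p) * (1 - ((p : ℕ) : ℂ) ^ (-s))⁻¹)
        = fun _ : Nat.Primes => (1 : ℂ) := by
      funext p
      exact mul_inv_cancel₀ (hmx p)
    have hone : HasProd (fun _ : Nat.Primes => (1 : ℂ))
        ((∏' p : Nat.Primes, (1 - x p)) * riemannZeta s) := hfun ▸ hmul2
    have h1 := hasProd_one.unique hone
    exact eq_inv_of_mul_eq_one_left h1.symm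
  -- assemble everything
  have hLHS : LSeries (lamq q) s
      = ∏' p : Nat.Primes, ∑' e : ℕ, LSeries.term (lamq q) s ((p : ℕ) ^ e) :=
    hE.tprod_eq.symm
  rw [hLHS]
  have hfactor : ∀ p : Nat.Primes,
      (∑' e : ℕ, LSeries.term (lamq q) s ((p : ℕ) ^ e))
        = (1 - ((p : ℕ) : ℂ) ^ (-((q : ℂ) * s)))⁻¹ *
          ((1 - ((p : ℕ) : ℂ) ^ (-((2 : ℂ) * s)))⁻¹ * ((1 - x p) * D p)) := by
    intro p
    rw [hloc p, local_id hq (hxnorm p), hxq p, hx2 p, hDform p]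
  rw [tprod_congr hfactor]
  have hAm := hA.multipliable
  have hBm := hB.multipliable
  have hCDm : Multipliable fun p : Nat.Primes => (1 - x p) * D p := hCm.mul hDm
  have hBCDm : Multipliable fun p : Nat.Primes =>
      (1 - ((p : ℕ) : ℂ) ^ (-((2 : ℂ) * s)))⁻¹ * ((1 - x p) * D p) := hBm.mul hCDm
  rw [Multipliable.tprod_mul hAm hBCDm, Multipliable.tprod_mul hBm hCDm, Multipliable.tprod_mul hCm hDm,
    hA.tprod_eq, hB.tprod_eq, hCprod, div_eq_mul_inv]
  ring
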